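/- arXiv:1807.10683 — 2 statements merged into one kernel-verified Lean document; each statement's English description precedes it below -/
import Mathlib

section
/- Let H be a strongly primary monoid with m = H \ H^×. Then Λ(H) < ∞ if and only if there exists c ∈ m such that Λ({cᵐ : m ∈ ℕ₀}) < ∞. -/
open Pointwise

section MonoidDefs

variable {G : Type*} [CommGroup G]

/-- `x` is a unit of the submonoid `H`. -/
def IsHUnit (H : Submonoid G) (x : G) : Prop := x ∈ H ∧ x⁻¹ ∈ H

/-- The set of non-units of `H`. -/
def nonUnits (H : Submonoid G) : Set G := {x | x ∈ H ∧ x⁻¹ ∉ H}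

/-- `u` is an atom (irreducible element) of `H`. -/
def IsHAtom (H : Submonoid G) (u : G) : Prop :=
  u ∈ H ∧ ¬ IsHUnit H u ∧
    ∀ a b : G, a ∈ H → b ∈ H → u = a * b → IsHUnit H a ∨ IsHUnit H b

/-- `G` is the quotient group of `H`. -/
def IsQuotientGroup (H : Submonoid G) : Prop :=
  ∀ g : G, ∃ a ∈ H, ∃ b ∈ H, g = a / b

/-- `H` is a primary monoid. -/
def IsPrimaryMonoid (H : Submonoid G) : Prop :=
  (nonUnits H).Nonempty ∧
    ∀ a ∈ nonUnits H, ∀ b ∈ nonUnits H, ∃ n : ℕ, 0 < n ∧ b ^ n ∈ a • (H : Set G)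

/-- `H` is a strongly primary monoid. -/
def IsStronglyPrimary (H : Submonoid G) : Prop :=
  (nonUnits H).Nonempty ∧
    ∀ a ∈ nonUnits H, ∃ n : ℕ, 0 < n ∧ nonUnits H ^ n ⊆ a • (H : Set G)

/-- `x` and `y` are associated in `H`. -/
def HAssoc (H : Submonoid G) (x y : G) : Prop := IsHUnit H (x / y)

/-- The set of lengths of `a`: all `k` such that `a` is a product of `k` atoms
(up to a unit of `H`). -/
def lengthSet (H : Submonoid G) (a : G) : Set ℕ :=
  {k | ∃ s : Multiset G, Multiset.card s = k ∧ (∀ v ∈ s, IsHAtom H v) ∧ HAssoc H a s.prod}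

/-- `Λ(S)`, the supremum of the minimal factorization lengths of elements of `S`. -/
noncomputable def Lambda (H : Submonoid G) (S : Set G) : ℕ∞ :=
  ⨆ (a : G) (_ : a ∈ S) (_ : (lengthSet H a).Nonempty), ((sInf (lengthSet H a) : ℕ) : ℕ∞)

/-- `ρ_k(H)`, the supremum of `sup L(a)` over all `a` with `k ∈ L(a)`. -/
noncomputable def rho (H : Submonoid G) (k : ℕ∞) : ℕ∞ :=
  ⨆ (a : G) (_ : a ∈ H) (_ : ∃ n ∈ lengthSet H a, (n : ℕ∞) = k),
    ⨆ (n : ℕ) (_ : n ∈ lengthSet H a), (n : ℕ∞)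

/-- The elasticity `ρ(H) = sup { m/n : m, n ∈ L(a), a ∈ H }`. -/
noncomputable def elasticity (H : Submonoid G) : ENNReal :=
  ⨆ (a : G) (_ : a ∈ H) (m : ℕ) (_ : m ∈ lengthSet H a) (n : ℕ) (_ : n ∈ lengthSet H a),
    (m : ENNReal) / (n : ENNReal)

/-- `z` is a factorization of `a`: a multiset of atoms whose product is associated to `a`. -/
def IsFactorization (H : Submonoid G) (a : G) (z : Multiset G) : Prop :=
  (∀ v ∈ z, IsHAtom H v) ∧ HAssoc H a z.prod

/-- The distance between two factorizations: cancel a (maximal) common part (up to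
associates) and take the maximum of the lengths of the remaining parts. -/
noncomputable def fdist (H : Submonoid G) (z z' : Multiset G) : ℕ :=
  sInf {N : ℕ | ∃ x x' v w : Multiset G, z = x + v ∧ z' = x' + w ∧
    Multiset.Rel (HAssoc H) x x' ∧ max (Multiset.card v) (Multiset.card w) ≤ N}

/-- `N` is a tame bound for the atom `u`: for every multiple `a` of `u` and every
factorization `z` of `a` there is a factorization `z'` of `a` containing `u`
with `d(z, z') ≤ N`. -/
def TameBound (H : Submonoid G) (u : G) (N : ℕ) : Prop :=
  ∀ a ∈ H, (∃ b ∈ H, a = u * b) → ∀ z : Multiset G, IsFactorization H a z →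
    ∃ z' : Multiset G, IsFactorization H a z' ∧ (∃ v ∈ z', HAssoc H v u) ∧ fdist H z z' ≤ N

/-- `H` is locally tame: `t(u) < ∞` for every atom `u`. -/
def LocallyTame (H : Submonoid G) : Prop :=
  ∀ u : G, IsHAtom H u → ∃ N : ℕ, TameBound H u N

/-- `H` is globally tame: `sup { t(u) : u an atom } < ∞`. -/
def GloballyTame (H : Submonoid G) : Prop :=
  ∃ N : ℕ, ∀ u : G, IsHAtom H u → TameBound H u N

/-- The local tame degree `t(u)` of `u`. -/
noncomputable def tameDeg (H : Submonoid G) (u : G) : ℕ∞ :=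
  sInf {N : ℕ∞ | ∃ n : ℕ, TameBound H u n ∧ N = (n : ℕ∞)}

/-- `N` is an omega bound for `a`: whenever `a` divides a product of elements of `H`,
it divides a subproduct with at most `N` factors. -/
def OmegaBound (H : Submonoid G) (a : G) (N : ℕ) : Prop :=
  ∀ s : Multiset G, (∀ x ∈ s, x ∈ H) → (∃ c ∈ H, s.prod = a * c) →
    ∃ t : Multiset G, t ≤ s ∧ Multiset.card t ≤ N ∧ ∃ c ∈ H, t.prod = a * c

/-- The omega invariant `ω(a)`. -/
noncomputable def omegaDeg (H : Submonoid G) (a : G) : ℕ∞ :=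
  sInf {N : ℕ∞ | ∃ n : ℕ, OmegaBound H a n ∧ N = (n : ℕ∞)}

/-- `M(x)`: the smallest `n ≥ 1` with `mⁿ ⊆ xH`. -/
noncomputable def Mdeg (H : Submonoid G) (x : G) : ℕ :=
  sInf {n : ℕ | 0 < n ∧ nonUnits H ^ n ⊆ x • (H : Set G)}

/-- The complete integral closure `Ĥ` of `H` (inside the quotient group). -/
def hatH (H : Submonoid G) : Set G := {x | ∃ c ∈ H, ∀ n : ℕ, c * x ^ n ∈ H}

/-- The set of non-units of `Ĥ`. -/
def hatNonUnits (H : Submonoid G) : Set G := {x | x ∈ hatH H ∧ x⁻¹ ∉ hatH H}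

/-- The root closure `H̃` of `H`. -/
def tildeH (H : Submonoid G) : Set G := {x | ∃ n : ℕ, 0 < n ∧ x ^ n ∈ H}

/-- The set of non-units of `H̃`. -/
def tildeNonUnits (H : Submonoid G) : Set G := {x | x ∈ tildeH H ∧ x⁻¹ ∉ tildeH H}

/-- The seminormal closure `H'` of `H`. -/
def seminormalClosure (H : Submonoid G) : Set G :=
  {x | ∃ N : ℕ, ∀ n : ℕ, N ≤ n → x ^ n ∈ H}

/-- The conductor `(H : Ĥ)`. -/
def conductorH (H : Submonoid G) : Set G := {z | ∀ x ∈ hatH H, z * x ∈ H}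

/-- `Ĥ` is a primary monoid. -/
def HatPrimary (H : Submonoid G) : Prop :=
  (hatNonUnits H).Nonempty ∧
    ∀ a ∈ hatNonUnits H, ∀ b ∈ hatNonUnits H,
      ∃ n : ℕ, 0 < n ∧ ∃ c ∈ hatH H, b ^ n = a * c

/-- `Ĥ` is a valuation monoid. -/
def HatValuation (H : Submonoid G) : Prop :=
  ∀ a ∈ hatH H, ∀ b ∈ hatH H,
    (∃ c ∈ hatH H, b = a * c) ∨ (∃ c ∈ hatH H, a = b * c)

/-- `H` is atomic. -/
def Atomic (H : Submonoid G) : Prop :=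
  ∀ a ∈ nonUnits H, ∃ s : Multiset G, (∀ v ∈ s, IsHAtom H v) ∧ a = s.prod

/-- `H` is a discrete valuation monoid, i.e. `H_red ≅ (ℕ₀, +)`. -/
def IsDiscreteValuationMonoid (H : Submonoid G) : Prop :=
  ∃ p ∈ H, ¬ IsHUnit H p ∧ ∀ a ∈ H, ∃ n : ℕ, ∃ ε : G, IsHUnit H ε ∧ a = ε * p ^ n

end MonoidDefs

section Stmt16Aux

variable {G : Type*} [CommGroup G] {H : Submonoid G}

lemma isHUnit_one' : IsHUnit H (1:G) := ⟨H.one_mem, by simpa using H.one_mem⟩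

lemma IsHUnit.mul' {a b : G} (ha : IsHUnit H a) (hb : IsHUnit H b) : IsHUnit H (a*b) :=
  ⟨H.mul_mem ha.1 hb.1, by rw [mul_inv]; exact H.mul_mem ha.2 hb.2⟩

lemma hassoc_refl' (a : G) : HAssoc H a a := by
  unfold HAssoc
  simpa [div_self'] using (isHUnit_one' : IsHUnit H (1:G))

lemma IsHAtom.mem_nonUnits' {u : G} (hu : IsHAtom H u) : u ∈ nonUnits H :=
  ⟨hu.1, fun h => hu.2.1 ⟨hu.1, h⟩⟩

lemma multiset_exists_le_card {α : Type*} (s : Multiset α) {n : ℕ} (h : n ≤ Multiset.card s) :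
    ∃ t ≤ s, Multiset.card t = n := by
  refine ⟨((s.toList.take n : List α) : Multiset α), ?_, ?_⟩
  · have h1 : List.Subperm (s.toList.take n) s.toList := (List.take_sublist _ _).subperm
    have h2 := (Multiset.coe_le).mpr h1
    simpa [Multiset.coe_toList] using h2
  · have := Multiset.length_toList s
    simp only [Multiset.coe_card, List.length_take]
    omega

lemma prod_mem_pow' (s : Multiset G) (hs : ∀ x ∈ s, x ∈ nonUnits H) :
    s.prod ∈ (nonUnits H) ^ (Multiset.card s) := by
  induction s using Multiset.induction with
  | empty => simp [Set.mem_one]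
  | cons a s ih =>
    rw [Multiset.prod_cons, Multiset.card_cons, pow_succ, mul_comm a s.prod]
    exact Set.mul_mem_mul (ih (fun x hx => hs x (Multiset.mem_cons_of_mem hx)))
      (hs a (Multiset.mem_cons_self a s))

lemma nonunit_of_assoc_atoms {b : G} (hbH : b ∈ H) (s : Multiset G)
    (hs : ∀ v ∈ s, IsHAtom H v) (hne : s ≠ 0) (hbs : HAssoc H b s.prod) :
    b ∈ nonUnits H := by
  classical
  refine ⟨hbH, fun hbinv => ?_⟩
  obtain ⟨u, hu⟩ := Multiset.exists_mem_of_ne_zero hne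
  have hatom := hs u hu
  have hε : IsHUnit H (b / s.prod) := hbs
  have hrest : (s.erase u).prod ∈ H :=
    multiset_prod_mem _ (fun x hx => (hs x (Multiset.mem_of_mem_erase hx)).1)
  have h1 : u * (s.erase u).prod = s.prod := Multiset.prod_erase hu
  have h2 : u⁻¹ = (s.erase u).prod * ((b / s.prod) * b⁻¹) := by
    rw [← h1]
    simp [div_eq_mul_inv, mul_inv, mul_comm, mul_left_comm, mul_assoc]
  have : u⁻¹ ∈ H := by
    rw [h2]; exact H.mul_mem hrest (H.mul_mem hε.1 hbinv)
  exact hatom.2.1 ⟨hatom.1, this⟩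

lemma card_le_of_prod' (a : G) (N : ℕ) (hN : nonUnits H ^ N ⊆ a • (H : Set G))
    (s : Multiset G) (hs : ∀ x ∈ s, x ∈ nonUnits H) (hprod : a = s.prod) :
    Multiset.card s ≤ N := by
  classical
  by_contra hlt
  push_neg at hlt
  obtain ⟨t, hts, htc⟩ := multiset_exists_le_card s (le_of_lt hlt)
  have htmem : t.prod ∈ nonUnits H ^ N := by
    rw [← htc]
    exact prod_mem_pow' t (fun x hx => hs x (Multiset.mem_of_le hts hx))
  obtain ⟨h, hh, hth0⟩ := hN htmem
  have hth : a * h = t.prod := by simpa using hth0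
  have hst : s - t + t = s := tsub_add_cancel_of_le hts
  have hps : (s - t).prod * t.prod = s.prod := by rw [← Multiset.prod_add, hst]
  have hkey : a = (s - t).prod * (a * h) := by
    rw [hth, hps]; exact hprod
  have hone : (1:G) = (s - t).prod * h := by
    have h3 : a * 1 = a * ((s - t).prod * h) := by
      rw [mul_one]
      calc a = (s - t).prod * (a * h) := hkey
        _ = a * ((s - t).prod * h) := by
          simp [mul_comm, mul_left_comm, mul_assoc]
    exact mul_left_cancel h3
  have hcardpos : 0 < Multiset.card (s - t) := by
    rw [Multiset.card_sub hts]; omega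
  have hstne : (s - t) ≠ 0 := by
    intro h0; rw [h0] at hcardpos; simp at hcardpos
  obtain ⟨x, hx⟩ := Multiset.exists_mem_of_ne_zero hstne
  have hxs : x ∈ nonUnits H := hs x (Multiset.mem_of_le (tsub_le_self) hx)
  have hpe : x * ((s - t).erase x).prod = (s - t).prod := Multiset.prod_erase hx
  have hxinv : x⁻¹ = ((s - t).erase x).prod * h := by
    apply inv_eq_of_mul_eq_one_right
    rw [← mul_assoc, hpe, ← hone]
  have : x⁻¹ ∈ H := by
    rw [hxinv]
    exact H.mul_mem
      (multiset_prod_mem _ (fun y hy =>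
        (hs y (Multiset.mem_of_le tsub_le_self (Multiset.mem_of_mem_erase hy))).1)) hh
  exact hxs.2 this

lemma exists_atoms' (hsp : IsStronglyPrimary H) {b : G} (hb : b ∈ nonUnits H) :
    ∃ s : Multiset G, s ≠ 0 ∧ (∀ v ∈ s, IsHAtom H v) ∧ b = s.prod := by
  classical
  obtain ⟨N, hN0, hNsub⟩ := hsp.2 b hb
  set T := {j : ℕ | ∃ s : Multiset G, Multiset.card s = j ∧ (∀ x ∈ s, x ∈ nonUnits H) ∧ b = s.prod}
    with hT
  have h1 : 1 ∈ T := ⟨{b}, by simp, by simpa using hb, by simp⟩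
  have hbdd : BddAbove T := by
    refine ⟨N, fun j hj => ?_⟩
    obtain ⟨s, hc, hs, hp⟩ := hj
    rw [← hc]; exact card_le_of_prod' b N hNsub s hs hp
  have hmem : sSup T ∈ T := Nat.sSup_mem ⟨1, h1⟩ hbdd
  obtain ⟨s, hc, hs, hp⟩ := hmem
  have hcard1 : 1 ≤ Multiset.card s := by
    rw [hc]; exact le_csSup hbdd h1
  refine ⟨s, ?_, fun u hu => ?_, hp⟩
  · intro h0; rw [h0] at hcard1; simp at hcard1
  · have hun := hs u hu
    refine ⟨hun.1, fun h => hun.2 h.2, fun p q hp' hq' hupq => ?_⟩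
    by_contra hcon
    push_neg at hcon
    obtain ⟨hnp, hnq⟩ := hcon
    have hnew : Multiset.card s + 1 ∈ T := by
      rw [hT]
      refine ⟨p ::ₘ q ::ₘ s.erase u, ?_, ?_, ?_⟩
      · have hpos : 0 < Multiset.card s := Multiset.card_pos_iff_exists_mem.mpr ⟨u, hu⟩
        simp only [Multiset.card_cons, Multiset.card_erase_of_mem hu, Nat.pred_eq_sub_one]
        omega
      · intro x hx
        rcases Multiset.mem_cons.mp hx with rfl | hx'
        · exact ⟨hp', fun hi => hnp ⟨hp', hi⟩⟩
        rcases Multiset.mem_cons.mp hx' with rfl | hx''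
        · exact ⟨hq', fun hi => hnq ⟨hq', hi⟩⟩
        · exact hs x (Multiset.mem_of_mem_erase hx'')
      · rw [Multiset.prod_cons, Multiset.prod_cons, ← mul_assoc, ← hupq,
          Multiset.prod_erase hu]
        exact hp
    have := le_csSup hbdd hnew
    omega

lemma lengthSet_pow_nonempty' (hsp : IsStronglyPrimary H) {c : G} (hc : c ∈ nonUnits H) :
    ∀ t : ℕ, (lengthSet H (c ^ t)).Nonempty := by
  obtain ⟨sc, hsc0, hscat, hscp⟩ := exists_atoms' hsp hc
  intro t
  induction t with
  | zero =>
    refine ⟨0, 0, by simp, by simp, ?_⟩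
    unfold HAssoc
    simpa using (isHUnit_one' : IsHUnit H (1:G))
  | succ t ih =>
    obtain ⟨j, s, hcard, hs, hass⟩ := ih
    refine ⟨j + Multiset.card sc, s + sc, by simp [hcard], ?_, ?_⟩
    · intro v hv
      rcases Multiset.mem_add.mp hv with h | h
      · exact hs v h
      · exact hscat v h
    · unfold HAssoc
      rw [pow_succ, Multiset.prod_add, ← div_mul_div_comm]
      exact IsHUnit.mul' hass (by rw [← hscp]; exact hassoc_refl' c)

lemma lambda_lt_top_iff' (S : Set G) :
    Lambda H S < ⊤ ↔ ∃ L : ℕ, ∀ a ∈ S, (lengthSet H a).Nonempty → sInf (lengthSet H a) ≤ L := by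
  constructor
  · intro h
    obtain ⟨L, hLeq⟩ := WithTop.ne_top_iff_exists.mp h.ne
    refine ⟨L, fun a haS hne => ?_⟩
    have h1 : ((sInf (lengthSet H a) : ℕ) : ℕ∞) ≤ Lambda H S := by
      refine le_iSup_of_le a ?_
      refine le_iSup_of_le haS ?_
      exact le_iSup_of_le hne le_rfl
    rw [← hLeq] at h1
    exact ENat.coe_le_coe.mp h1
  · rintro ⟨L, hL⟩
    have hle : Lambda H S ≤ (L : ℕ∞) := by
      apply iSup_le; intro a; apply iSup_le; intro haS; apply iSup_le; intro hne
      exact ENat.coe_le_coe.mpr (hL a haS hne)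
    exact lt_of_le_of_lt hle (WithTop.coe_lt_top L)

end Stmt16Aux

section Stmt16Key

variable {G : Type*} [CommGroup G] {H : Submonoid G}

lemma key_bound (hsp : IsStronglyPrimary H) {c : G} (hc : c ∈ nonUnits H)
    {n : ℕ} (hn : nonUnits H ^ n ⊆ c • (H : Set G))
    {L : ℕ} (hL : ∀ t : ℕ, sInf (lengthSet H (c ^ t)) ≤ L)
    {a : G} (ha : a ∈ H) (hne : (lengthSet H a).Nonempty) :
    sInf (lengthSet H a) ≤ L + n := by
  classical
  by_contra hk
  push_neg at hk
  obtain ⟨s0, hs0c, hs0a, hs0assoc⟩ := Nat.sInf_mem hne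
  have step1 : ∀ (t : ℕ) (b : G) (s : Multiset G), a = c ^ t * b →
      (∀ v ∈ s, IsHAtom H v) → HAssoc H b s.prod →
      sInf (lengthSet H a) ≤ L + Multiset.card s := by
    intro t b s hab hsat hsassoc
    obtain ⟨sc', hc1, hc2, hc3⟩ := Nat.sInf_mem (lengthSet_pow_nonempty' hsp hc t)
    have hmem : sInf (lengthSet H (c ^ t)) + Multiset.card s ∈ lengthSet H a := by
      refine ⟨sc' + s, by simp [hc1], ?_, ?_⟩
      · intro v hv
        rcases Multiset.mem_add.mp hv with h | h
        · exact hc2 v h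
        · exact hsat v h
      · unfold HAssoc at hc3 hsassoc ⊢
        rw [hab, Multiset.prod_add, ← div_mul_div_comm]
        exact IsHUnit.mul' hc3 hsassoc
    have h4 := Nat.sInf_le hmem
    have h5 := hL t
    omega
  have anon : a ∈ nonUnits H := by
    refine nonunit_of_assoc_atoms ha s0 hs0a ?_ hs0assoc
    intro h0
    rw [h0] at hs0c
    simp at hs0c
    omega
  obtain ⟨N, hN0, hNsub⟩ := hsp.2 a anon
  have main : ∀ t : ℕ, ∃ b, b ∈ H ∧ a = c ^ t * b ∧
      ∃ s : Multiset G, (∀ v ∈ s, IsHAtom H v) ∧ HAssoc H b s.prod := by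
    intro t
    induction t with
    | zero => exact ⟨a, ha, by simp, s0, hs0a, hs0assoc⟩
    | succ t ih =>
      obtain ⟨b, hbH, hab, s, hsat, hsassoc⟩ := ih
      have hcard : n ≤ Multiset.card s := by
        have := step1 t b s hab hsat hsassoc
        omega
      obtain ⟨t', ht's, ht'c⟩ := multiset_exists_le_card s hcard
      have htmem : t'.prod ∈ nonUnits H ^ n := by
        rw [← ht'c]
        exact prod_mem_pow' t' (fun x hx =>
          (hsat x (Multiset.mem_of_le ht's hx)).mem_nonUnits')
      obtain ⟨h, hh, hch0⟩ := hn htmem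
      have hch : c * h = t'.prod := by simpa using hch0
      have hε : IsHUnit H (b / s.prod) := hsassoc
      have hrestH : (s - t').prod ∈ H :=
        multiset_prod_mem _ (fun x hx =>
          (hsat x (Multiset.mem_of_le tsub_le_self hx)).1)
      set b' := (b / s.prod) * h * (s - t').prod with hb'def
      have hb'H : b' ∈ H := H.mul_mem (H.mul_mem hε.1 hh) hrestH
      have hab' : a = c ^ (t + 1) * b' := by
        have hsplit : (s - t').prod * t'.prod = s.prod := by
          rw [← Multiset.prod_add, tsub_add_cancel_of_le ht's]
        have hbe : b = (b / s.prod) * s.prod := (div_mul_cancel b s.prod).symm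
        rw [hab, pow_succ, hb'def]
        calc c ^ t * b = c ^ t * ((b / s.prod) * s.prod) := by rw [← hbe]
          _ = c ^ t * ((b / s.prod) * ((s - t').prod * (c * h))) := by
            rw [hch, hsplit]
          _ = c ^ t * c * (b / s.prod * h * (s - t').prod) := by
            simp [mul_comm, mul_left_comm, mul_assoc]
      by_cases hb'inv : b'⁻¹ ∈ H
      · exfalso
        obtain ⟨sc', hc1, hc2, hc3⟩ := Nat.sInf_mem (lengthSet_pow_nonempty' hsp hc (t + 1))
        have hmem2 : sInf (lengthSet H (c ^ (t + 1))) ∈ lengthSet H a := by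
          refine ⟨sc', hc1, hc2, ?_⟩
          unfold HAssoc at hc3 ⊢
          rw [hab', mul_div_right_comm]
          exact IsHUnit.mul' hc3 ⟨hb'H, hb'inv⟩
        have h4 := Nat.sInf_le hmem2
        have h5 := hL (t + 1)
        omega
      · obtain ⟨s'', hs''0, hs''at, hs''p⟩ := exists_atoms' hsp ⟨hb'H, hb'inv⟩
        exact ⟨b', hb'H, hab', s'', hs''at, hs''p ▸ hassoc_refl' b'⟩
  obtain ⟨b, hbH, hab, s, hsat, hsassoc⟩ := main (N + 1)
  have hcard1 : 1 ≤ Multiset.card s := by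
    have := step1 (N + 1) b s hab hsat hsassoc
    omega
  have hbnon : b ∈ nonUnits H := by
    refine nonunit_of_assoc_atoms hbH s hsat ?_ hsassoc
    intro h0; rw [h0] at hcard1; simp at hcard1
  have hall : ∀ x ∈ (b ::ₘ Multiset.replicate (N + 1) c), x ∈ nonUnits H := by
    intro x hx
    rcases Multiset.mem_cons.mp hx with rfl | hx'
    · exact hbnon
    · rw [Multiset.eq_of_mem_replicate hx']; exact hc
  have hpr : a = (b ::ₘ Multiset.replicate (N + 1) c).prod := by
    rw [Multiset.prod_cons, Multiset.prod_replicate, mul_comm]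
    exact hab
  have hcard2 := card_le_of_prod' a N hNsub _ hall hpr
  simp at hcard2

end Stmt16Key

/-- Let `H` be a strongly primary monoid. Then `Λ(H) < ∞` iff there
exists a non-unit `c` with `Λ({cᵐ : m ∈ ℕ₀}) < ∞`. -/
theorem stmt16 {G : Type*} [CommGroup G] (H : Submonoid G) (hq : IsQuotientGroup H)
    (hsp : IsStronglyPrimary H) :
    Lambda H (H : Set G) < ⊤ ↔
      ∃ c ∈ nonUnits H, Lambda H (Set.range fun m : ℕ => c ^ m) < ⊤ := by
  constructor
  · intro h
    obtain ⟨c, hc⟩ := hsp.1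
    obtain ⟨L, hL⟩ := (lambda_lt_top_iff' _).mp h
    refine ⟨c, hc, (lambda_lt_top_iff' _).mpr ⟨L, fun x hx hxne => ?_⟩⟩
    obtain ⟨m, rfl⟩ := hx
    exact hL _ (pow_mem hc.1 m) hxne
  · rintro ⟨c, hc, hLam⟩
    obtain ⟨L, hL⟩ := (lambda_lt_top_iff' _).mp hLam
    obtain ⟨n, hn0, hnsub⟩ := hsp.2 c hc
    refine (lambda_lt_top_iff' _).mpr ⟨L + n, fun a ha hane => ?_⟩
    exact key_bound hsp hc hnsub
      (fun t => hL (c ^ t) ⟨t, rfl⟩ (lengthSet_pow_nonempty' hsp hc t)) ha hane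
end

section
/- Let H be a strongly primary monoid with Λ(H) = ∞, and let n = Ĥ \ Ĥ^×. Then every element of n has a power lying in m = H \ H^×, and consequently Ĥ is primary. -/
open Pointwise

section AuxLemmas

variable {G : Type*} [CommGroup G] {H : Submonoid G}

lemma aux_pow_subset : ∀ k : ℕ, (nonUnits H : Set G) ^ k ⊆ (H : Set G)
  | 0 => by
      rw [pow_zero]
      intro y hy
      rw [Set.mem_one] at hy
      subst hy; exact one_mem H
  | (k+1) => by
      rw [pow_succ]
      intro y hy
      obtain ⟨a, ha, b, hb, hab⟩ := Set.mem_mul.mp hy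
      subst hab
      exact mul_mem (aux_pow_subset k ha) hb.1

lemma aux_mul_unit_mem {y ε : G} (hy : y ∈ nonUnits H) (he : ε ∈ H) (he' : ε⁻¹ ∈ H) :
    y * ε ∈ nonUnits H := by
  refine ⟨mul_mem hy.1 he, fun h => hy.2 ?_⟩
  have hid : y⁻¹ = (y * ε)⁻¹ * ε := by
    rw [mul_inv_rev, mul_comm ε⁻¹ y⁻¹, mul_assoc, inv_mul_cancel, mul_one]
  rw [hid]; exact mul_mem h he

lemma aux_prod_mem_pow (s : Multiset G) :
    s ≠ 0 → (∀ v ∈ s, v ∈ nonUnits H) → ∀ ε : G, ε ∈ H → ε⁻¹ ∈ H →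
    s.prod * ε ∈ (nonUnits H : Set G) ^ (Multiset.card s) := by
  induction s using Multiset.induction_on with
  | empty => intro h; exact absurd rfl h
  | cons v t ih =>
    intro _ hmem ε hε hε'
    rcases eq_or_ne t 0 with ht | ht
    · subst ht
      simp only [Multiset.prod_cons, Multiset.prod_zero, mul_one, Multiset.card_cons,
        Multiset.card_zero, zero_add, pow_one]
      exact aux_mul_unit_mem (hmem v (Multiset.mem_cons_self v 0)) hε hε'
    · have hv : v ∈ nonUnits H := hmem v (Multiset.mem_cons_self v t)
      have h2 : t.prod * ε ∈ (nonUnits H : Set G) ^ (Multiset.card t) :=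
        ih ht (fun w hw => hmem w (Multiset.mem_cons_of_mem hw)) ε hε hε'
      have he : (v ::ₘ t).prod * ε = (t.prod * ε) * v := by
        rw [Multiset.prod_cons]; ac_rfl
      rw [he, Multiset.card_cons, pow_succ]
      exact Set.mul_mem_mul h2 hv

lemma aux_sp_mono (y : G) {n : ℕ} (hn : (nonUnits H : Set G) ^ n ⊆ y • (H : Set G)) :
    ∀ k, n ≤ k → (nonUnits H : Set G) ^ k ⊆ y • (H : Set G) := by
  intro k hk
  obtain ⟨d, rfl⟩ := Nat.exists_eq_add_of_le hk
  rw [pow_add]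
  intro t ht
  obtain ⟨a, ha, b, hb, hab⟩ := Set.mem_mul.mp ht
  subst hab
  rcases Set.mem_smul_set.mp (hn ha) with ⟨h1, hh1, hE⟩
  subst hE
  exact Set.mem_smul_set.mpr ⟨h1 * b, mul_mem hh1 (aux_pow_subset d hb),
    by rw [smul_eq_mul, smul_eq_mul, mul_assoc]⟩

lemma aux_bound_general (y : G) (hy : y ∈ nonUnits H) {n : ℕ}
    (hn : (nonUnits H : Set G) ^ n ⊆ y • (H : Set G)) {k : ℕ} {t h : G}
    (ht : t ∈ (nonUnits H : Set G) ^ k) (hh : h ∈ H) (heq : y = t * h) : k ≤ n := by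
  by_contra hlt
  push_neg at hlt
  obtain ⟨d, hd⟩ : ∃ d, k = d + n := ⟨k - n, by omega⟩
  have hd1 : 1 ≤ d := by omega
  subst hd
  rw [pow_add] at ht
  obtain ⟨t1, ht1, t2, ht2, hab⟩ := Set.mem_mul.mp ht
  rcases Set.mem_smul_set.mp (hn ht2) with ⟨h2, hh2, hE⟩
  have heq2 : y = t1 * (y * h2) * h := by
    rw [← hab, ← hE, smul_eq_mul] at heq; exact heq
  have h' : y * (t1 * (h2 * h)) = y * 1 := by
    rw [mul_one]
    conv_rhs => rw [heq2]
    ac_rfl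
  have hone := mul_left_cancel h'
  obtain ⟨e, hde⟩ : ∃ e, d = e + 1 := ⟨d - 1, by omega⟩
  subst hde
  rw [pow_succ] at ht1
  obtain ⟨u1, hu1, u2, hu2, hu⟩ := Set.mem_mul.mp ht1
  refine hu2.2 ?_
  have hm1 : u2 * (u1 * (h2 * h)) = 1 := by
    rw [← hone, ← hu]; ac_rfl
  rw [inv_eq_of_mul_eq_one_right hm1]
  exact mul_mem (aux_pow_subset e hu1) (mul_mem hh2 hh)

lemma aux_card_le (y : G) (hy : y ∈ nonUnits H) {n k : ℕ}
    (hn : (nonUnits H : Set G) ^ n ⊆ y • (H : Set G))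
    (hyk : y ∈ (nonUnits H : Set G) ^ k) : k ≤ n :=
  aux_bound_general y hy hn hyk (one_mem H) (mul_one y).symm

lemma aux_atomic_aux : ∀ B : ℕ, ∀ y : G, y ∈ nonUnits H →
    (∀ k, y ∈ (nonUnits H : Set G) ^ k → k ≤ B) →
    ∃ s : Multiset G, s ≠ 0 ∧ (∀ v ∈ s, IsHAtom H v) ∧ s.prod = y := by
  intro B
  induction B using Nat.strong_induction_on with
  | _ B ih =>
    intro y hy hbound
    by_cases hatom : IsHAtom H y
    · refine ⟨{y}, by simp, ?_, by simp⟩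
      intro v hv
      rw [Multiset.mem_singleton] at hv
      subst hv; exact hatom
    · have h1 : ¬ (∀ a b : G, a ∈ H → b ∈ H → y = a * b → IsHUnit H a ∨ IsHUnit H b) := by
        intro hall
        exact hatom ⟨hy.1, fun hu => hy.2 hu.2, hall⟩
      push_neg at h1
      obtain ⟨a, b, haH, hbH, hyab, hna, hnb⟩ := h1
      have ham : a ∈ nonUnits H := ⟨haH, fun h => hna ⟨haH, h⟩⟩
      have hbm : b ∈ nonUnits H := ⟨hbH, fun h => hnb ⟨hbH, h⟩⟩
      have hB1 : 1 ≤ B := hbound 1 (by rw [pow_one]; exact hy)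
      have hbnd_a : ∀ k, a ∈ (nonUnits H : Set G) ^ k → k ≤ B - 1 := by
        intro k hk
        have : k + 1 ≤ B := by
          refine hbound (k+1) ?_
          rw [pow_succ, hyab]
          exact Set.mul_mem_mul hk hbm
        omega
      have hbnd_b : ∀ k, b ∈ (nonUnits H : Set G) ^ k → k ≤ B - 1 := by
        intro k hk
        have : k + 1 ≤ B := by
          refine hbound (k+1) ?_
          rw [pow_succ, hyab, mul_comm a b]
          exact Set.mul_mem_mul hk ham
        omega
      obtain ⟨sa, hsane, hsaat, hsap⟩ := ih (B-1) (by omega) a ham hbnd_a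
      obtain ⟨sb, hsbne, hsbat, hsbp⟩ := ih (B-1) (by omega) b hbm hbnd_b
      obtain ⟨v, hv⟩ := Multiset.exists_mem_of_ne_zero hsane
      refine ⟨sa + sb, ?_, ?_, ?_⟩
      · intro h0
        exact Multiset.notMem_zero v (h0 ▸ Multiset.mem_add.mpr (Or.inl hv))
      · intro w hw
        rcases Multiset.mem_add.mp hw with h | h
        exacts [hsaat w h, hsbat w h]
      · rw [Multiset.prod_add, hsap, hsbp, ← hyab]

lemma aux_exists_atomic (hsp : IsStronglyPrimary H) {y : G} (hy : y ∈ nonUnits H) :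
    ∃ s : Multiset G, s ≠ 0 ∧ (∀ v ∈ s, IsHAtom H v) ∧ s.prod = y := by
  obtain ⟨n, hnpos, hn⟩ := hsp.2 y hy
  exact aux_atomic_aux n y hy (fun k hk => aux_card_le y hy hn hk)

lemma aux_mem_hatH {y : G} (hy : y ∈ H) : y ∈ hatH H :=
  ⟨1, one_mem H, fun n => by simpa using pow_mem hy n⟩

lemma aux_hatH_mul {x y : G} (hx : x ∈ hatH H) (hy : y ∈ hatH H) : x * y ∈ hatH H := by
  obtain ⟨c, hcH, hc⟩ := hx
  obtain ⟨d, hdH, hd⟩ := hy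
  refine ⟨c * d, mul_mem hcH hdH, fun n => ?_⟩
  have he : c * d * (x * y) ^ n = (c * x ^ n) * (d * y ^ n) := by
    rw [mul_pow]; ac_rfl
  rw [he]
  exact mul_mem (hc n) (hd n)

lemma aux_hatH_pow {x : G} (hx : x ∈ hatH H) : ∀ k : ℕ, x ^ k ∈ hatH H
  | 0 => by rw [pow_zero]; exact aux_mem_hatH (one_mem H)
  | (k+1) => by rw [pow_succ]; exact aux_hatH_mul (aux_hatH_pow hx k) hx

lemma aux_inv_mem_hatH {x c : G} (hcH : c ∈ H) (hc : ∀ n : ℕ, c * x ^ n ∈ H) {j : ℕ}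
    (hj : 0 < j) (hxj : (x⁻¹) ^ j ∈ H) : x⁻¹ ∈ hatH H := by
  refine ⟨c, hcH, fun n => ?_⟩
  induction n using Nat.strong_induction_on with
  | _ n ihn =>
    rcases le_or_gt j n with hle | hlt
    · have heq : c * (x⁻¹) ^ n = (c * (x⁻¹) ^ (n - j)) * (x⁻¹) ^ j := by
        rw [mul_assoc, ← pow_add]
        congr 2
        omega
      rw [heq]
      exact mul_mem (ihn (n - j) (by omega)) hxj
    · have h1 : (x⁻¹) ^ j = (x⁻¹) ^ (j - n) * (x⁻¹) ^ n := by
        rw [← pow_add]; congr 1; omega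
      have h2 : x ^ (j - n) * (x⁻¹) ^ (j - n) = 1 := by
        rw [inv_pow, mul_inv_cancel]
      have heq : c * (x⁻¹) ^ n = (c * x ^ (j - n)) * (x⁻¹) ^ j := by
        rw [h1]
        calc c * (x⁻¹) ^ n = c * (x ^ (j-n) * (x⁻¹) ^ (j-n)) * (x⁻¹) ^ n := by
              rw [h2, mul_one]
          _ = (c * x ^ (j-n)) * ((x⁻¹) ^ (j-n) * (x⁻¹) ^ n) := by ac_rfl
      rw [heq]
      exact mul_mem (hc (j - n)) hxj

lemma aux_exists_maxj {x z : G} (hzH : z ∈ H) (hx2 : x⁻¹ ∉ hatH H) :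
    ∃ j : ℕ, z * (x⁻¹) ^ j ∈ H ∧ z * (x⁻¹) ^ (j+1) ∉ H := by
  by_contra hcon
  push_neg at hcon
  apply hx2
  refine ⟨z, hzH, fun n => ?_⟩
  induction n with
  | zero => simpa using hzH
  | succ n ihn => exact hcon n ihn

lemma aux_length_pow {y : G} {k : ℕ} (hk : k ∈ lengthSet H y) :
    IsHUnit H y ∨ (1 ≤ k ∧ y ∈ (nonUnits H : Set G) ^ k) := by
  obtain ⟨s, hcard, hatoms, hassoc⟩ := hk
  rcases eq_or_ne s 0 with h0 | h0
  · left
    subst h0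
    have : IsHUnit H (y / (0 : Multiset G).prod) := hassoc
    rwa [Multiset.prod_zero, div_one] at this
  · right
    have hunit : IsHUnit H (y / s.prod) := hassoc
    constructor
    · rw [← hcard]
      exact Multiset.card_pos.mpr h0
    · have heq : s.prod * (y / s.prod) = y := by
        rw [div_eq_mul_inv, mul_comm, mul_assoc, inv_mul_cancel, mul_one]
      have hmem := aux_prod_mem_pow s h0
        (fun v hv => ⟨(hatoms v hv).1, fun hh => (hatoms v hv).2.1 ⟨(hatoms v hv).1, hh⟩⟩)
        (y / s.prod) hunit.1 hunit.2
      rw [heq] at hmem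
      rwa [hcard] at hmem
end AuxLemmas

/-- Let `H` be a strongly primary monoid with `Λ(H) = ∞`. Then every
element of `n = Ĥ \\ Ĥ^×` has a power lying in `m`, and consequently `Ĥ` is primary. -/
theorem stmt17 {G : Type*} [CommGroup G] (H : Submonoid G) (hq : IsQuotientGroup H)
    (hsp : IsStronglyPrimary H) (hL : Lambda H (H : Set G) = ⊤) :
    (∀ x ∈ hatNonUnits H, ∃ k : ℕ, 0 < k ∧ x ^ k ∈ nonUnits H) ∧ HatPrimary H := by
  have part1 : ∀ x ∈ hatNonUnits H, ∃ k : ℕ, 0 < k ∧ x ^ k ∈ nonUnits H := by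
    rintro x ⟨⟨c, hcH, hc⟩, hx2⟩
    by_cases hpow : ∃ k : ℕ, 0 < k ∧ x ^ k ∈ H
    · obtain ⟨k, hk, hxk⟩ := hpow
      refine ⟨k, hk, hxk, fun hinv => ?_⟩
      refine hx2 (aux_inv_mem_hatH hcH hc hk ?_)
      rw [inv_pow]; exact hinv
    · exfalso
      have hcm : c ∈ nonUnits H := by
        refine ⟨hcH, fun hcinv => ?_⟩
        refine hpow ⟨1, one_pos, ?_⟩
        have h1 : c * x ∈ H := by simpa using hc 1
        have hxx : c⁻¹ * (c * x) = x := inv_mul_cancel_left c x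
        rw [pow_one, ← hxx]
        exact mul_mem hcinv h1
      have hcx : c * x ∈ nonUnits H := by
        refine ⟨by simpa using hc 1, fun hinv => ?_⟩
        apply hx2
        apply aux_mem_hatH
        have hxx : x⁻¹ = (c * x)⁻¹ * c := by
          rw [mul_inv_rev, mul_assoc, inv_mul_cancel, mul_one]
        rw [hxx]
        exact mul_mem hinv hcH
      obtain ⟨n1, hn1pos, hn1⟩ := hsp.2 c hcm
      obtain ⟨n2, hn2pos, hn2⟩ := hsp.2 (c * x) hcx
      have key : ∀ y : G, y ∈ H → (lengthSet H y).Nonempty →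
          sInf (lengthSet H y) ≤ n1 + n2 := by
        intro y hyH hne
        by_cases hyu : IsHUnit H y
        · have h0 : (0 : ℕ) ∈ lengthSet H y := by
            refine ⟨0, by simp, ?_, ?_⟩
            · intro v hv; exact absurd hv (Multiset.notMem_zero v)
            · show IsHUnit H (y / (0 : Multiset G).prod)
              rwa [Multiset.prod_zero, div_one]
          exact le_trans (Nat.sInf_le h0) (Nat.zero_le _)
        · have hym : y ∈ nonUnits H := ⟨hyH, fun h => hyu ⟨hyH, h⟩⟩
          by_cases hyc : ∃ z, z ∈ H ∧ y = c * z
          · obtain ⟨z, hzH, hyz⟩ := hyc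
            obtain ⟨j, hj1, hj2⟩ := aux_exists_maxj hzH hx2
            have hwH : c * x ^ j ∈ H := hc j
            have hyzw : y = (z * (x⁻¹) ^ j) * (c * x ^ j) := by
              have h2 : (x⁻¹) ^ j * x ^ j = 1 := by rw [inv_pow, inv_mul_cancel]
              have : (z * (x⁻¹) ^ j) * (c * x ^ j) = (c * z) * ((x⁻¹) ^ j * x ^ j) := by
                ac_rfl
              rw [this, h2, mul_one, hyz]
            have hwm : c * x ^ j ∈ nonUnits H := by
              refine ⟨hwH, fun hwinv => ?_⟩
              rcases Nat.eq_zero_or_pos j with hj0 | hjpos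
              · subst hj0
                rw [pow_zero, mul_one] at hwinv
                exact hcm.2 hwinv
              · apply hx2
                refine aux_inv_mem_hatH hcH hc hjpos ?_
                have hxx : (x⁻¹) ^ j = (c * x ^ j)⁻¹ * c := by
                  rw [mul_inv_rev, mul_assoc, inv_mul_cancel, mul_one, inv_pow]
                rw [hxx]
                exact mul_mem hwinv hcH
            obtain ⟨s1, hs1ne, hs1atoms, hs1prod⟩ := aux_exists_atomic hsp hwm
            have hs1pow : c * x ^ j ∈ (nonUnits H : Set G) ^ (Multiset.card s1) := by
              rw [← hs1prod]
              have := aux_prod_mem_pow s1 hs1ne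
                (fun v hv => ⟨(hs1atoms v hv).1,
                  fun hh => (hs1atoms v hv).2.1 ⟨(hs1atoms v hv).1, hh⟩⟩)
                1 (one_mem H) (by simpa using one_mem H)
              simpa using this
            have hk1 : Multiset.card s1 ≤ n1 := by
              rcases Nat.eq_zero_or_pos j with hj0 | hjpos
              · subst hj0
                rw [pow_zero, mul_one] at hs1pow
                exact aux_card_le c hcm hn1 hs1pow
              · by_contra hgt
                push_neg at hgt
                have hmem := aux_sp_mono c hn1 _ hgt.le hs1pow
                rcases Set.mem_smul_set.mp hmem with ⟨h, hhH, hch⟩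
                rw [smul_eq_mul] at hch
                refine hpow ⟨j, hjpos, ?_⟩
                have : h = x ^ j := mul_left_cancel hch
                exact this ▸ hhH
            by_cases hzu : IsHUnit H (z * (x⁻¹) ^ j)
            · have hmem : Multiset.card s1 ∈ lengthSet H y := by
                refine ⟨s1, rfl, hs1atoms, ?_⟩
                show IsHUnit H (y / s1.prod)
                rw [hs1prod]
                have : y / (c * x ^ j) = z * (x⁻¹) ^ j := by
                  rw [hyzw, mul_div_assoc, div_self', mul_one]
                rw [this]
                exact hzu
              have := Nat.sInf_le hmem
              omega
            · have hzm : z * (x⁻¹) ^ j ∈ nonUnits H := ⟨hj1, fun h => hzu ⟨hj1, h⟩⟩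
              obtain ⟨s2, hs2ne, hs2atoms, hs2prod⟩ := aux_exists_atomic hsp hzm
              have hs2pow : z * (x⁻¹) ^ j ∈ (nonUnits H : Set G) ^ (Multiset.card s2) := by
                rw [← hs2prod]
                have := aux_prod_mem_pow s2 hs2ne
                  (fun v hv => ⟨(hs2atoms v hv).1,
                    fun hh => (hs2atoms v hv).2.1 ⟨(hs2atoms v hv).1, hh⟩⟩)
                  1 (one_mem H) (by simpa using one_mem H)
                simpa using this
              have hk2 : Multiset.card s2 ≤ n2 := by
                by_contra hgt
                push_neg at hgt
                have hmem := aux_sp_mono (c * x) hn2 _ hgt.le hs2pow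
                rcases Set.mem_smul_set.mp hmem with ⟨h, hhH, hch⟩
                rw [smul_eq_mul] at hch
                refine hj2 ?_
                have he1 : z * (x⁻¹) ^ (j+1) = (z * (x⁻¹) ^ j) * x⁻¹ := by
                  rw [pow_succ, mul_assoc]
                have he2 : c * x * h * x⁻¹ = c * h := by
                  have : c * x * h * x⁻¹ = (c * h) * (x * x⁻¹) := by ac_rfl
                  rw [this, mul_inv_cancel, mul_one]
                rw [he1, ← hch, he2]
                exact mul_mem hcH hhH
              have hmem : Multiset.card s1 + Multiset.card s2 ∈ lengthSet H y := by
                refine ⟨s1 + s2, by rw [Multiset.card_add], ?_, ?_⟩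
                · intro v hv
                  rcases Multiset.mem_add.mp hv with h | h
                  exacts [hs1atoms v h, hs2atoms v h]
                · show IsHUnit H (y / (s1 + s2).prod)
                  rw [Multiset.prod_add, hs1prod, hs2prod]
                  have : y / (c * x ^ j * (z * (x⁻¹) ^ j)) = 1 := by
                    rw [div_eq_one, hyzw]
                    ac_rfl
                  rw [this]
                  exact ⟨one_mem H, by simpa using one_mem H⟩
              have := Nat.sInf_le hmem
              omega
          · obtain ⟨k0, hk0⟩ := hne
            rcases aux_length_pow hk0 with h | ⟨hk01, hk0pow⟩
            · exact absurd h hyu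
            · have hble : k0 ≤ n1 := by
                by_contra hgt
                push_neg at hgt
                have hmem := aux_sp_mono c hn1 _ hgt.le hk0pow
                rcases Set.mem_smul_set.mp hmem with ⟨h, hhH, hch⟩
                rw [smul_eq_mul] at hch
                exact hyc ⟨h, hhH, hch.symm⟩
              have := Nat.sInf_le hk0
              omega
      have hle : Lambda H (H : Set G) ≤ ((n1 + n2 : ℕ) : ℕ∞) := by
        unfold Lambda
        refine iSup_le fun y => iSup_le fun hy => iSup_le fun hne => ?_
        exact_mod_cast key y hy hne
      rw [hL] at hle
      exact (ENat.coe_ne_top (n1 + n2)) (top_le_iff.mp hle)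
  refine ⟨part1, ?_, ?_⟩
  · obtain ⟨a0, ha0⟩ := hsp.1
    refine ⟨a0, aux_mem_hatH ha0.1, ?_⟩
    rintro ⟨d, hdH, hd⟩
    have hdm : d ∈ nonUnits H := by
      refine ⟨hdH, fun hdinv => ?_⟩
      apply ha0.2
      have h1 := hd 1
      have hxx : a0⁻¹ = d⁻¹ * (d * (a0⁻¹) ^ 1) := by
        rw [pow_one, inv_mul_cancel_left]
      rw [hxx]
      exact mul_mem hdinv h1
    obtain ⟨nd, hndpos, hnd⟩ := hsp.2 d hdm
    have ht : a0 ^ (nd + 1) ∈ (nonUnits H : Set G) ^ (nd + 1) := Set.pow_mem_pow ha0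
    have hh : d * (a0⁻¹) ^ (nd + 1) ∈ H := hd (nd + 1)
    have heq : d = (a0 ^ (nd + 1)) * (d * (a0⁻¹) ^ (nd + 1)) := by
      rw [inv_pow, mul_comm d, ← mul_assoc, mul_inv_cancel, one_mul]
    have := aux_bound_general d hdm hnd ht hh heq
    omega
  · intro a ha b hb
    obtain ⟨l, hl, hal⟩ := part1 a ha
    obtain ⟨k, hk, hbk⟩ := part1 b hb
    obtain ⟨nA, hnApos, hnA⟩ := hsp.2 (a ^ l) hal
    have hbpow : (b ^ k) ^ nA ∈ (nonUnits H : Set G) ^ nA := Set.pow_mem_pow hbk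
    rcases Set.mem_smul_set.mp (hnA hbpow) with ⟨h, hhH, hch⟩
    rw [smul_eq_mul] at hch
    refine ⟨k * nA, Nat.mul_pos hk hnApos, a ^ (l - 1) * h, ?_, ?_⟩
    · exact aux_hatH_mul (aux_hatH_pow ha.1 (l - 1)) (aux_mem_hatH hhH)
    · have hll : a ^ l = a * a ^ (l - 1) := by
        conv_lhs => rw [show l = (l - 1) + 1 from by omega]
        rw [pow_succ, mul_comm]
      rw [pow_mul, ← hch, hll, mul_assoc]
end
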